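/- In the setting of the abstract canonical basis lemma, the set {b~ : b in β} of bar-invariant lifts is a Z[v,v^{-1}]-basis of M, a Z[v^{-1}]-basis of L, and a Z-basis of L ∩ bar(L). -/

import Mathlib

noncomputable section
set_option synthInstance.maxHeartbeats 1000000
set_option maxHeartbeats 1000000
open LaurentPolynomial

/-- `ℤ[v,v⁻¹]` -/
abbrev R := LaurentPolynomial ℤ
/-- `ℤ[v⁻¹]`, as a subalgebra of `ℤ[v,v⁻¹]` (generated by `v⁻¹ = T (-1)`). -/
def Aneg : Subalgebra ℤ R := Algebra.adjoin ℤ {T (-1)}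

variable {β : Type} {M : Type} [AddCommGroup M] [Module R M]

/-- The `ℤ[v⁻¹]`-span `L` of the basis, as the set of elements with coordinates in `ℤ[v⁻¹]`. -/
def Lset (B : Module.Basis β R M) : Set M := {m | ∀ b, B.repr m b ∈ Aneg}

/-- The `ℤ[v⁻¹]`-span of the basis, as an `ℤ[v⁻¹]`-submodule. -/
def Lsub (B : Module.Basis β R M) : Submodule ↥Aneg M := Submodule.span ↥Aneg (Set.range B)

/-! ### Auxiliary lemmas -/

lemma C_apply' (r : ℤ) (n : ℤ) : (C r : R).coeff n = if n = 0 then r else 0 := by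
  have : (C r : R) = AddMonoidAlgebra.single 0 r := by
    rw [← single_eq_C]
  rw [this, AddMonoidAlgebra.coeff_single, Finsupp.single_apply]
  simp [eq_comm]

lemma C_int (a : ℤ) : (C a : R) = algebraMap ℤ R a := by
  rw [LaurentPolynomial.algebraMap_apply, Algebra.algebraMap_self_apply]

lemma C_smul' (a : ℤ) (x : M) : (C a : R) • x = a • x := by
  rw [C_int, algebraMap_smul]

lemma T_mem_Aneg {n : ℤ} (hn : n ≤ 0) : (T n : R) ∈ Aneg := by
  have key : ∀ k : ℕ, (T (-(k:ℤ)) : R) ∈ Aneg := by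
    intro k
    induction k with
    | zero => simpa [T_zero] using one_mem Aneg
    | succ k ih =>
        have : (T (-(k+1:ℕ):ℤ) : R) = T (-(k:ℤ)) * T (-1) := by
          rw [← T_add]; congr 1; push_cast; ring
        rw [this]
        exact mul_mem ih (Algebra.subset_adjoin rfl)
  have : n = -((-n).toNat : ℤ) := by omega
  rw [this]; exact key _

lemma mem_Aneg_iff {c : R} : c ∈ Aneg ↔ ∀ n : ℤ, 0 < n → c.coeff n = 0 := by
  constructor
  · intro hc
    refine Algebra.adjoin_induction ?_ ?_ ?_ ?_ hc
    · rintro x rfl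
      intro n hn
      rw [T_apply]
      split <;> [omega; rfl]
    · intro r n hn
      rw [LaurentPolynomial.algebraMap_apply, Algebra.algebraMap_self_apply, C_apply']
      simp; omega
    · intro x y _ _ hx hy n hn
      rw [AddMonoidAlgebra.coeff_add, Finsupp.add_apply, hx n hn, hy n hn, add_zero]
    · intro x y _ _ hx hy n hn
      classical
      rw [AddMonoidAlgebra.coeff_mul]
      refine Finset.sum_eq_zero fun a ha => Finset.sum_eq_zero fun b hb => ?_
      dsimp only
      split_ifs with h
      · rcases lt_or_ge 0 a with h1 | h1
        · rw [hx a h1, zero_mul]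
        · rw [hy b (by omega), mul_zero]
      · rfl
  · intro h
    rw [← c.sum_coeff_single]
    refine Submodule.sum_mem Aneg.toSubmodule fun n hn => ?_
    have hn0 : n ≤ 0 := by
      by_contra hp
      exact (Finsupp.mem_support_iff.mp hn) (h n (by omega))
    have h2 : (C (c.coeff n) * T n : R) ∈ Aneg :=
      Subalgebra.mul_mem _ (by rw [C_eq_algebraMap]; exact Subalgebra.algebraMap_mem _ (c.coeff n))
        (T_mem_Aneg hn0)
    rwa [← single_eq_C_mul_T] at h2

lemma bar_smul' (bar : M →ₗ[ℤ] M)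
    (hbar_v : ∀ (k : ℤ) (m : M), bar ((T k : R) • m) = (T (-k) : R) • bar m)
    (c : R) (m : M) : bar (c • m) = invert c • bar m := by
  induction c using AddMonoidAlgebra.induction_linear with
  | zero => simp
  | add f g hf hg => rw [add_smul, map_add, hf, hg, map_add, add_smul]
  | single n a =>
      rw [single_eq_C_mul_T, map_mul, invert_T, invert_C, mul_smul, mul_smul,
        C_smul', C_smul', map_zsmul, hbar_v]

lemma eq_zero_of_invert_self {d : R} (hd : d ∈ Aneg) {c : R} (hc : c = T (-1) * d)
    (hsym : invert c = c) : c = 0 := by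
  have h1 : ∀ n : ℤ, 0 ≤ n → c.coeff n = 0 := by
    intro n hn
    rw [hc]
    rw [show (T (-1) : R) = AddMonoidAlgebra.single (-1 : ℤ) (1:ℤ) from rfl]
    rw [AddMonoidAlgebra.coeff_single_mul_apply, one_mul]
    exact mem_Aneg_iff.mp hd _ (by omega)
  ext n
  rcases le_or_gt 0 n with hn | hn
  · rw [h1 n hn]; rfl
  · have : c.coeff n = c.coeff (-n) := by conv_lhs => rw [← hsym, invert_apply]
    rw [this, h1 (-n) (by omega)]; rfl

lemma invert_eq_intCast {d : R} (hd : d ∈ Aneg) (hd' : invert d ∈ Aneg) :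
    ∃ z : ℤ, d = algebraMap ℤ R z := by
  refine ⟨d.coeff 0, ?_⟩
  rw [← C_int]
  have : (C (d.coeff 0) : R) = AddMonoidAlgebra.single (0:ℤ) (d.coeff 0) := by rw [← single_eq_C]
  rw [this]
  ext n
  rw [AddMonoidAlgebra.coeff_single, Finsupp.single_apply]
  rcases lt_trichotomy n 0 with hn | hn | hn
  · rw [if_neg (by omega)]
    have := mem_Aneg_iff.mp hd' (-n) (by omega)
    rw [invert_apply, neg_neg] at this
    exact this
  · subst hn; simp
  · rw [if_neg (by omega)]
    exact mem_Aneg_iff.mp hd n hn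

/-! ### Main theorem -/

/-- In the abstract canonical basis lemma, the bar-invariant lifts `b~` form a
`ℤ[v,v⁻¹]`-basis of `M`, a `ℤ[v⁻¹]`-basis of `L`, and a `ℤ`-basis of `L ∩ bar(L)`. -/
theorem canonical_basis_lemma_bases [PartialOrder β]
    (hfin : ∀ b : β, {b' | b' < b}.Finite)
    (B : Module.Basis β R M)
    (bar : M →ₗ[ℤ] M)
    (hinv : ∀ m, bar (bar m) = m)
    (hbar_v : ∀ (k : ℤ) (m : M), bar ((T k : R) • m) = (T (-k) : R) • bar m)
    (htriang : ∀ b : β, bar (B b) - B b ∈ Submodule.span R (B '' {b' | b' < b}))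
    (bt : β → M)
    (hbt : ∀ b : β, bt b ∈ Lset B ∧ bar (bt b) = bt b ∧
      ∃ y ∈ Lset B, bt b - B b = (T (-1) : R) • y) :
    (∃ Bn : Module.Basis β R M, ∀ b, Bn b = bt b) ∧
    (∃ BL : Module.Basis β ↥Aneg ↥(Lsub B), ∀ b, (BL b : M) = bt b) ∧
    (∃ BZ : Module.Basis β ℤ
        ↥(((Lsub B).restrictScalars ℤ) ⊓ Submodule.map bar ((Lsub B).restrictScalars ℤ)),
      ∀ b, (BZ b : M) = bt b) := by
  classical
  -- well-foundedness of `<`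
  have hlt_wf : WellFounded ((· < ·) : β → β → Prop) := by
    have hmono : ∀ a b : β, a < b → (hfin a).toFinset.card < (hfin b).toFinset.card := by
      intro a b hab
      refine Finset.card_lt_card ?_
      rw [Finset.ssubset_iff_of_subset ?_]
      · exact ⟨a, by simp [hab], by simp⟩
      · intro x hx
        simp only [Set.Finite.mem_toFinset, Set.mem_setOf_eq] at hx ⊢
        exact hx.trans hab
    exact Subrelation.wf (fun {a b} h => hmono a b h)
      (measure fun b => (hfin b).toFinset.card).wf
  -- expansion of any element in the basis B
  have hxsum : ∀ m : M, m = ∑ i ∈ (B.repr m).support, (B.repr m) i • B i := by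
    intro m
    conv_lhs => rw [← B.linearCombination_repr m]
    rw [Finsupp.linearCombination_apply, Finsupp.sum]
  -- coordinates of `bt b - B b` lie in Aneg
  have hxAneg : ∀ b b'', B.repr (bt b - B b) b'' ∈ Aneg := by
    intro b b''
    rw [map_sub, Finsupp.sub_apply, B.repr_self]
    refine sub_mem ((hbt b).1 b'') ?_
    rw [Finsupp.single_apply]
    split
    · exact one_mem _
    · exact zero_mem _
  -- KEY: support of `bt b - B b` consists of elements `< b`
  have hsupp : ∀ b b', ¬ b' < b → B.repr (bt b - B b) b' = 0 := by
    intro b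
    by_contra hcon
    push_neg at hcon
    obtain ⟨b₁, hb₁lt, hb₁ne⟩ := hcon
    set x := bt b - B b with hxdef
    set S : Set β := {b'' | B.repr x b'' ≠ 0 ∧ ¬ b'' < b} with hSdef
    have hSfin : S.Finite :=
      ((B.repr x).support.finite_toSet).subset fun z hz => Finsupp.mem_support_iff.mpr hz.1
    have hSne : S.Nonempty := ⟨b₁, hb₁ne, hb₁lt⟩
    obtain ⟨b₀, hb₀S, hb₀max⟩ := Set.Finite.exists_maximalFor id S hSfin hSne
    -- step (ii): B.repr (bar x) b₀ = invert (B.repr x b₀)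
    have hbarx : bar x = ∑ i ∈ (B.repr x).support, invert ((B.repr x) i) • bar (B i) := by
      conv_lhs => rw [hxsum x]
      rw [map_sum]
      exact Finset.sum_congr rfl fun i _ => bar_smul' bar hbar_v _ _
    have hrepr_bar : B.repr (bar x) b₀ = invert (B.repr x b₀) := by
      rw [hbarx, map_sum, Finsupp.finset_sum_apply]
      have hterm : ∀ i ∈ (B.repr x).support,
          B.repr (invert ((B.repr x) i) • bar (B i)) b₀
            = invert ((B.repr x) i) * (Finsupp.single i (1:R)) b₀ := by
        intro i hi
        rw [map_smul, Finsupp.smul_apply, smul_eq_mul]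
        congr 1
        have hwi : B.repr (bar (B i) - B i) b₀ = 0 := by
          have hmem := htriang i
          rw [B.mem_span_image] at hmem
          by_contra hne
          have hb₀lt : b₀ < i := hmem (Finsupp.mem_support_iff.mpr hne)
          -- then i ∈ S and b₀ < i contradicts maximality
          have hiS : i ∈ S := by
            refine ⟨Finsupp.mem_support_iff.mp hi, fun hib => hb₀S.2 (hb₀lt.trans hib)⟩
          exact absurd (hb₀max hiS hb₀lt.le) hb₀lt.not_ge
        have : B.repr (bar (B i)) b₀ = B.repr (B i) b₀ := by
          have := hwi
          rw [map_sub, Finsupp.sub_apply, sub_eq_zero] at this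
          exact this
        rw [this, B.repr_self]
      rw [Finset.sum_congr rfl hterm]
      rw [Finset.sum_eq_single b₀ (fun i _ hine => by
            rw [Finsupp.single_apply, if_neg hine, mul_zero])
          (fun hb₀ => by
            rw [Finsupp.notMem_support_iff.mp hb₀]; simp)]
      rw [Finsupp.single_apply, if_pos rfl, mul_one]
    -- step (iii): bar x - x is supported on `{b' | b' < b}`
    have hbarx_sub : B.repr (bar x) b₀ = B.repr x b₀ := by
      have hbx : bar x = x - (bar (B b) - B b) := by
        rw [hxdef, map_sub, (hbt b).2.1]
        abel
      have h0 : B.repr (bar (B b) - B b) b₀ = 0 := by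
        have hmem := htriang b
        rw [B.mem_span_image] at hmem
        by_contra hne
        exact hb₀S.2 (hmem (Finsupp.mem_support_iff.mpr hne))
      rw [hbx, map_sub, Finsupp.sub_apply, h0, sub_zero]
    -- step (iv): the coefficient is in v⁻¹ℤ[v⁻¹] and bar-symmetric, hence zero
    obtain ⟨y, hyL, hxy⟩ := (hbt b).2.2
    have hc0 : B.repr x b₀ = T (-1) * B.repr y b₀ := by
      rw [hxdef, hxy, map_smul, Finsupp.smul_apply, smul_eq_mul]
    have : B.repr x b₀ = 0 :=
      eq_zero_of_invert_self (hyL b₀) hc0 (hrepr_bar ▸ hbarx_sub)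
    exact hb₀S.1 this
  -- repr of bt at non-smaller indices
  have hbtrepr : ∀ b b', ¬ b' < b → B.repr (bt b) b' = (Finsupp.single b (1:R)) b' := by
    intro b b' h
    have := hsupp b b' h
    rw [map_sub, Finsupp.sub_apply, sub_eq_zero] at this
    rw [this, B.repr_self]
  -- Linear independence of bt over R
  have hli : LinearIndependent R bt := by
    rw [linearIndependent_iff]
    intro l hl
    by_contra hlne
    have hlsupp : (↑l.support : Set β).Nonempty := by
      rw [Finset.coe_nonempty, Finsupp.support_nonempty_iff]
      exact hlne
    obtain ⟨b₀, hb₀S, hb₀max⟩ :=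
      Set.Finite.exists_maximalFor id _ (l.support.finite_toSet) hlsupp
    have h0 : B.repr (Finsupp.linearCombination R bt l) b₀ = l b₀ := by
      rw [Finsupp.linearCombination_apply, Finsupp.sum, map_sum, Finsupp.finset_sum_apply]
      have hterm : ∀ i ∈ l.support,
          B.repr (l i • bt i) b₀ = l i * (Finsupp.single i (1:R)) b₀ := by
        intro i hi
        rw [map_smul, Finsupp.smul_apply, smul_eq_mul]
        congr 1
        refine hbtrepr i b₀ fun hlt => ?_
        exact absurd (hb₀max hi hlt.le) hlt.not_ge
      rw [Finset.sum_congr rfl hterm,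
        Finset.sum_eq_single b₀ (fun i _ hine => by
          rw [Finsupp.single_apply, if_neg hine, mul_zero])
        (fun hb₀ => by rw [Finsupp.notMem_support_iff.mp hb₀]; simp),
        Finsupp.single_apply, if_pos rfl, mul_one]
    rw [hl, map_zero, Finsupp.coe_zero, Pi.zero_apply] at h0
    exact (Finsupp.mem_support_iff.mp hb₀S) h0.symm
  -- membership in Aneg-span from coordinates
  have hmemA : ∀ (m : M) (s : Set β), (∀ b', B.repr m b' ∈ Aneg) →
      (↑(B.repr m).support ⊆ s) → m ∈ Submodule.span ↥Aneg (B '' s) := by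
    intro m s h1 h2
    rw [hxsum m]
    refine Submodule.sum_mem _ fun i hi => ?_
    have : (B.repr m) i • B i = (⟨B.repr m i, h1 i⟩ : ↥Aneg) • B i := rfl
    rw [this]
    exact Submodule.smul_mem _ _ (Submodule.subset_span ⟨i, h2 hi, rfl⟩)
  -- bt b ∈ Lsub B
  have hbtLsub : ∀ b, bt b ∈ Lsub B := by
    intro b
    have := hmemA (bt b) Set.univ ((hbt b).1) (Set.subset_univ _)
    rwa [Set.image_univ] at this
  -- B b in the Aneg-span of bt
  have hBspan : ∀ b, B b ∈ Submodule.span ↥Aneg (Set.range bt) := by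
    intro b
    induction b using hlt_wf.induction with
    | _ b ih =>
      have hx : bt b - B b ∈ Submodule.span ↥Aneg (B '' {b' | b' < b}) := by
        refine hmemA _ _ (hxAneg b) ?_
        intro b'' hb''
        by_contra h
        exact (Finsupp.mem_support_iff.mp hb'') (hsupp b b'' h)
      have hle : Submodule.span ↥Aneg (B '' {b' | b' < b})
          ≤ Submodule.span ↥Aneg (Set.range bt) := by
        rw [Submodule.span_le]
        rintro _ ⟨b', hb', rfl⟩
        exact ih b' hb'
      have heq : B b = bt b - (bt b - B b) := by abel
      rw [heq]
      exact sub_mem (Submodule.subset_span ⟨b, rfl⟩) (hle hx)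
  have hspanEq : Submodule.span ↥Aneg (Set.range bt) = Lsub B := by
    refine le_antisymm ?_ ?_
    · rw [Submodule.span_le]
      rintro _ ⟨b, rfl⟩
      exact hbtLsub b
    · rw [Lsub, Submodule.span_le]
      rintro _ ⟨b, rfl⟩
      exact hBspan b
  -- Part 1: R-basis
  have hsptop : ⊤ ≤ Submodule.span R (Set.range bt) := by
    rw [← B.span_eq]
    rw [Submodule.span_le]
    rintro _ ⟨b, rfl⟩
    exact Submodule.span_subset_span ↥Aneg R _ (hBspan b)
  let Bn : Module.Basis β R M := Module.Basis.mk hli hsptop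
  have hBn : ∀ b, Bn b = bt b := fun b => Module.Basis.mk_apply hli hsptop b
  refine ⟨⟨Bn, hBn⟩, ?_, ?_⟩
  · -- Part 2: Aneg-basis of Lsub
    have hliA : LinearIndependent ↥Aneg bt := by
      refine hli.restrict_scalars ?_
      intro a b h
      exact Subtype.ext (by simpa [Subalgebra.smul_def] using h)
    refine ⟨(Module.Basis.span hliA).map (LinearEquiv.ofEq _ _ hspanEq), fun b => ?_⟩
    rw [Module.Basis.map_apply]
    have : ((LinearEquiv.ofEq _ _ hspanEq) (Module.Basis.span hliA b) : M)
        = ((Module.Basis.span hliA b : M)) := rfl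
    rw [this, Module.Basis.span_apply]
  · -- Part 3: ℤ-basis of L ⊓ bar L
    have hliZ : LinearIndependent ℤ bt := by
      refine hli.restrict_scalars ?_
      intro a b h
      simp only [zsmul_eq_mul, mul_one] at h
      have ha : ((a : ℤ) : R).coeff 0 = ((b : ℤ) : R).coeff 0 := by rw [h]
      have hcast : ∀ z : ℤ, ((z : ℤ) : R).coeff 0 = z := by
        intro z
        rw [show ((z : ℤ) : R) = C z by rw [C_int]; norm_cast, C_apply']
        simp
      rwa [hcast, hcast] at ha
    -- coordinates of elements of Lsub w.r.t. Bn are in Aneg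
    have hcoordA : ∀ mm ∈ Lsub B, ∀ b, Bn.repr mm b ∈ Aneg := by
      intro mm hmm
      rw [← hspanEq] at hmm
      induction hmm using Submodule.span_induction with
      | mem z hz =>
          obtain ⟨i, rfl⟩ := hz
          intro b
          rw [← hBn, Bn.repr_self, Finsupp.single_apply]
          split
          · exact one_mem _
          · exact zero_mem _
      | zero => intro b; simp only [map_zero, Finsupp.coe_zero, Pi.zero_apply]; exact zero_mem _
      | add z w _ _ hz hw =>
          intro b
          rw [map_add, Finsupp.add_apply]
          exact add_mem (hz b) (hw b)
      | smul a z _ hz =>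
          intro b
          have : a • z = (a : R) • z := rfl
          rw [this, map_smul, Finsupp.smul_apply, smul_eq_mul]
          exact mul_mem a.2 (hz b)
    -- repr of bar in terms of repr, w.r.t. Bn
    have hreprbar : ∀ (mm : M) (b' : β), Bn.repr (bar mm) b' = invert (Bn.repr mm b') := by
      intro mm b'
      have hsum : mm = ∑ i ∈ (Bn.repr mm).support, (Bn.repr mm) i • Bn i := by
        conv_lhs => rw [← Bn.linearCombination_repr mm]
        rw [Finsupp.linearCombination_apply, Finsupp.sum]
      have hbar : bar mm = ∑ i ∈ (Bn.repr mm).support, invert ((Bn.repr mm) i) • Bn i := by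
        conv_lhs => rw [hsum]
        rw [map_sum]
        refine Finset.sum_congr rfl fun i _ => ?_
        rw [bar_smul' bar hbar_v, hBn, (hbt i).2.1, ← hBn]
      rw [hbar, map_sum, Finsupp.finset_sum_apply]
      have hterm : ∀ i, Bn.repr (invert ((Bn.repr mm) i) • Bn i) b'
          = invert ((Bn.repr mm) i) * (Finsupp.single i (1:R)) b' := by
        intro i
        rw [map_smul, Bn.repr_self, Finsupp.smul_apply, smul_eq_mul]
      rw [Finset.sum_congr rfl (fun i _ => hterm i),
        Finset.sum_eq_single b' (fun i _ hine => by
          rw [Finsupp.single_apply, if_neg hine, mul_zero])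
        (fun hb' => by rw [Finsupp.notMem_support_iff.mp hb']; simp),
        Finsupp.single_apply, if_pos rfl, mul_one]
    -- the ℤ-span of bt equals the intersection
    have hEeq : Submodule.span ℤ (Set.range bt)
        = ((Lsub B).restrictScalars ℤ) ⊓ Submodule.map bar ((Lsub B).restrictScalars ℤ) := by
      refine le_antisymm ?_ ?_
      · rw [Submodule.span_le]
        rintro _ ⟨b, rfl⟩
        refine ⟨hbtLsub b, ⟨bt b, hbtLsub b, (hbt b).2.1⟩⟩
      · rintro m ⟨hm1, m', hm', hmm'⟩
        have hbarm : bar m ∈ Lsub B := by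
          rw [← hmm', hinv]
          exact hm'
        have hd : ∀ b, ∃ z : ℤ, Bn.repr m b = algebraMap ℤ R z := by
          intro b
          refine invert_eq_intCast (hcoordA m hm1 b) ?_
          rw [← hreprbar]
          exact hcoordA (bar m) hbarm b
        have hsum : m = ∑ i ∈ (Bn.repr m).support, (Bn.repr m) i • Bn i := by
          conv_lhs => rw [← Bn.linearCombination_repr m]
          rw [Finsupp.linearCombination_apply, Finsupp.sum]
        rw [hsum]
        refine Submodule.sum_mem _ fun i hi => ?_
        obtain ⟨z, hz⟩ := hd i
        rw [hz, algebraMap_smul, hBn]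
        exact Submodule.smul_mem _ _ (Submodule.subset_span ⟨i, rfl⟩)
    refine ⟨(Module.Basis.span hliZ).map (LinearEquiv.ofEq _ _ hEeq), fun b => ?_⟩
    rw [Module.Basis.map_apply]
    have : ((LinearEquiv.ofEq _ _ hEeq) (Module.Basis.span hliZ b) : M)
        = ((Module.Basis.span hliZ b : M)) := rfl
    rw [this, Module.Basis.span_apply]
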